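/- Nonthermalization theorem (nondegenerate case): Let Ĥ be a nondegenerate Hamiltonian on H_S ⊗ H_B with eigenbasis |E_k⟩. For i = 1,2 let ψ₀^{(i)} = ψ₀^{S(i)} ⊗ φ₀^{B(i)} be pure product initial states with reduced time-averaged states ω^{S(i)} = Σ_k |c_k^{(i)}|² Tr_B|E_k⟩⟨E_k|, where c_k^{(i)} = ⟨E_k|ψ₀^{(i)}⟩. Then D(ω^{S(1)}, ω^{S(2)}) ≥ D(ψ₀^{S(1)}, ψ₀^{S(2)}) − R(ψ₀^{(1)}) − R(ψ₀^{(2)}). -/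

import Mathlib

open Matrix MeasureTheory Filter
open scoped ComplexOrder Kronecker

noncomputable def traceNorm {n : Type*} [Fintype n] [DecidableEq n] (A : Matrix n n ℂ) : ℝ :=
  (((Matrix.posSemidef_conjTranspose_mul_self A).1.eigenvectorUnitary.1 *
      diagonal (((↑) : ℝ → ℂ) ∘ (√·) ∘ (Matrix.posSemidef_conjTranspose_mul_self A).1.eigenvalues) *
      (star (Matrix.posSemidef_conjTranspose_mul_self A).1.eigenvectorUnitary :
        Matrix n n ℂ)).trace).re

/-- Trace distance `D(ρ,σ) = ‖ρ-σ‖₁/2`. -/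
noncomputable def traceDist {n : Type*} [Fintype n] [DecidableEq n] (ρ σ : Matrix n n ℂ) : ℝ :=
  traceNorm (ρ - σ) / 2

/-- A density matrix: positive semidefinite with unit trace. -/
def IsDensity {n : Type*} [Fintype n] [DecidableEq n] (ρ : Matrix n n ℂ) : Prop :=
  ρ.PosSemidef ∧ ρ.trace = 1

/-- Outer product `|v⟩⟨w|`. -/
noncomputable def outer {n : Type*} (v w : n → ℂ) : Matrix n n ℂ := Matrix.vecMulVec v (star w)

/-- Partial trace over the bath `B`. -/
noncomputable def ptraceB {dS dB : ℕ} (ρ : Matrix (Fin dS × Fin dB) (Fin dS × Fin dB) ℂ) :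
    Matrix (Fin dS) (Fin dS) ℂ := Matrix.of fun i j => ∑ b, ρ (i, b) (j, b)

/-- Product vector `s ⊗ φ` on the bipartite space `S ⊗ B`. -/
noncomputable def prodVec {dS dB : ℕ} (s : Fin dS → ℂ) (φ : Fin dB → ℂ) :
    Fin dS × Fin dB → ℂ := fun p => s p.1 * φ p.2

section auxLemmas
variable {n : Type*} [Fintype n] [DecidableEq n]

lemma trace_hermitian_cfc {A : Matrix n n ℂ} (hA : A.IsHermitian) (f : ℝ → ℝ) :
    (hA.cfc f).trace = ∑ i, ((f (hA.eigenvalues i) : ℝ) : ℂ) := by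
  rw [IsHermitian.cfc, Unitary.conjStarAlgAut_apply, trace_mul_cycle, Unitary.coe_star_mul_self, one_mul,
    trace_diagonal]
  rfl

lemma traceNorm_eq_cfc (A : Matrix n n ℂ) :
    traceNorm A = (cfc Real.sqrt (Aᴴ * A)).trace.re := by
  rw [(posSemidef_conjTranspose_mul_self A).1.cfc_eq]
  rfl

lemma traceNorm_eq_of_hermitian {A : Matrix n n ℂ} (hA : A.IsHermitian) :
    traceNorm A = ∑ i, |hA.eigenvalues i| := by
  rw [traceNorm_eq_cfc, hA.eq, ← sq, ← cfc_pow_id (R := ℝ) A 2 hA.isSelfAdjoint,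
    ← cfc_comp' Real.sqrt (· ^ 2) A (ha := hA.isSelfAdjoint)]
  have hf : (fun x : ℝ => Real.sqrt (x ^ 2)) = fun x => |x| :=
    funext fun x => Real.sqrt_sq_eq_abs x
  rw [hf, hA.cfc_eq, trace_hermitian_cfc, Complex.re_sum]
  simp

lemma sum_abs_diag_le {A : Matrix n n ℂ} (hA : A.IsHermitian) (U : Matrix n n ℂ)
    (hU : Uᴴ * U = 1) :
    ∑ i, ‖(Uᴴ * A * U) i i‖ ≤ traceNorm A := by
  set V : Matrix n n ℂ := (hA.eigenvectorUnitary : Matrix n n ℂ) with hVdef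
  have hV : Vᴴ * V = 1 := by
    simpa [star_eq_conjTranspose] using Matrix.mem_unitaryGroup_iff'.mp hA.eigenvectorUnitary.2
  have hV' : V * Vᴴ = 1 := mul_eq_one_comm.mp hV
  set D : Matrix n n ℂ := diagonal (fun i => ((hA.eigenvalues i : ℝ) : ℂ)) with hDdef
  have hspec : A = V * D * Vᴴ := by
    have := hA.spectral_theorem
    rw [Unitary.conjStarAlgAut_apply] at this
    exact this
  set W : Matrix n n ℂ := Vᴴ * U with hWdef
  have hW : Wᴴ * W = 1 := by
    rw [hWdef, conjTranspose_mul, conjTranspose_conjTranspose]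
    calc Uᴴ * V * (Vᴴ * U) = Uᴴ * (V * Vᴴ) * U := by noncomm_ring
    _ = 1 := by rw [hV', mul_one]; exact hU
  have hW' : W * Wᴴ = 1 := mul_eq_one_comm.mp hW
  have key : Uᴴ * A * U = Wᴴ * D * W := by
    rw [hspec, hWdef, conjTranspose_mul, conjTranspose_conjTranspose]; noncomm_ring
  have hentry : ∀ i, (Uᴴ * A * U) i i =
      ∑ j, star (W j i) * (((hA.eigenvalues j : ℝ) : ℂ) * W j i) := by
    intro i
    rw [key, mul_assoc, mul_apply]
    refine Finset.sum_congr rfl fun j _ => ?_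
    rw [conjTranspose_apply, hDdef, diagonal_mul]
  have hrow : ∀ j, ∑ i, ‖W j i‖ ^ 2 = 1 := by
    intro j
    have h1 : (W * Wᴴ) j j = 1 := by rw [hW']; simp
    have h2 : (W * Wᴴ) j j = ∑ i, ((‖W j i‖ ^ 2 : ℝ) : ℂ) := by
      rw [mul_apply]
      refine Finset.sum_congr rfl fun i _ => ?_
      rw [conjTranspose_apply, Complex.star_def, Complex.mul_conj, Complex.normSq_eq_norm_sq]
    rw [h2] at h1
    exact_mod_cast h1
  calc ∑ i, ‖(Uᴴ * A * U) i i‖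
      ≤ ∑ i, ∑ j, |hA.eigenvalues j| * ‖W j i‖ ^ 2 := by
        refine Finset.sum_le_sum fun i _ => ?_
        rw [hentry i]
        refine le_trans (norm_sum_le _ _) ?_
        refine le_of_eq (Finset.sum_congr rfl fun j _ => ?_)
        rw [norm_mul, norm_mul, Complex.star_def, Complex.norm_conj, Complex.norm_real, Real.norm_eq_abs]
        ring
    _ = ∑ j, |hA.eigenvalues j| * ∑ i, ‖W j i‖ ^ 2 := by
        rw [Finset.sum_comm]
        exact Finset.sum_congr rfl fun j _ => by rw [Finset.mul_sum]
    _ = ∑ j, |hA.eigenvalues j| := by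
        refine Finset.sum_congr rfl fun j _ => by rw [hrow j, mul_one]
    _ = traceNorm A := (traceNorm_eq_of_hermitian hA).symm

lemma traceNorm_add_le {A B : Matrix n n ℂ} (hA : A.IsHermitian) (hB : B.IsHermitian) :
    traceNorm (A + B) ≤ traceNorm A + traceNorm B := by
  have hAB : (A + B).IsHermitian := hA.add hB
  set U : Matrix n n ℂ := (hAB.eigenvectorUnitary : Matrix n n ℂ) with hUdef
  have hU : Uᴴ * U = 1 := by
    simpa [star_eq_conjTranspose] using Matrix.mem_unitaryGroup_iff'.mp hAB.eigenvectorUnitary.2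
  have hdiag : Uᴴ * (A + B) * U = diagonal (fun i => ((hAB.eigenvalues i : ℝ) : ℂ)) := by
    have := hAB.conjStarAlgAut_star_eigenvectorUnitary
    rw [Unitary.conjStarAlgAut_star_apply] at this
    exact this
  have h1 : traceNorm (A + B) = ∑ i, ‖(Uᴴ * (A + B) * U) i i‖ := by
    rw [traceNorm_eq_of_hermitian hAB]
    refine Finset.sum_congr rfl fun i _ => ?_
    rw [hdiag, diagonal_apply_eq, Complex.norm_real, Real.norm_eq_abs]
  have h2 : ∀ i, (Uᴴ * (A + B) * U) i i = (Uᴴ * A * U) i i + (Uᴴ * B * U) i i := by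
    intro i
    rw [show Uᴴ * (A + B) * U = Uᴴ * A * U + Uᴴ * B * U by noncomm_ring]
    rfl
  calc traceNorm (A + B) = ∑ i, ‖(Uᴴ * (A + B) * U) i i‖ := h1
    _ ≤ ∑ i, (‖(Uᴴ * A * U) i i‖ + ‖(Uᴴ * B * U) i i‖) := by
        refine Finset.sum_le_sum fun i _ => ?_
        rw [h2 i]; exact norm_add_le _ _
    _ = (∑ i, ‖(Uᴴ * A * U) i i‖) + ∑ i, ‖(Uᴴ * B * U) i i‖ :=
        Finset.sum_add_distrib
    _ ≤ traceNorm A + traceNorm B :=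
        add_le_add (sum_abs_diag_le hA U hU) (sum_abs_diag_le hB U hU)

lemma traceNorm_zero : traceNorm (0 : Matrix n n ℂ) = 0 := by
  rw [traceNorm_eq_cfc]
  simp

lemma traceNorm_smul_real {c : ℝ} (hc : 0 ≤ c) (A : Matrix n n ℂ) :
    traceNorm ((c : ℂ) • A) = c * traceNorm A := by
  have hM : ((c : ℂ) • A)ᴴ * ((c : ℂ) • A) = (c ^ 2 : ℝ) • (Aᴴ * A) := by
    ext i j
    simp [Complex.conj_ofReal]
    ring
  have hsa : IsSelfAdjoint (Aᴴ * A) := (posSemidef_conjTranspose_mul_self A).1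
  rw [traceNorm_eq_cfc, traceNorm_eq_cfc, hM,
    ← cfc_comp_const_mul (c ^ 2) Real.sqrt (Aᴴ * A) (ha := hsa)]
  have hf : (fun x : ℝ => Real.sqrt (c ^ 2 * x)) = fun x => c * Real.sqrt x :=
    funext fun x => by rw [Real.sqrt_mul (sq_nonneg c), Real.sqrt_sq hc]
  rw [hf, cfc_const_mul c Real.sqrt (Aᴴ * A), trace_smul, Complex.smul_re, smul_eq_mul]

lemma traceNorm_neg (A : Matrix n n ℂ) : traceNorm (-A) = traceNorm A := by
  rw [traceNorm_eq_cfc, traceNorm_eq_cfc]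
  simp

lemma isHermitian_sum_of {ι : Type*} (s : Finset ι) (f : ι → Matrix n n ℂ)
    (hf : ∀ i ∈ s, (f i).IsHermitian) : (∑ i ∈ s, f i).IsHermitian := by
  rw [IsHermitian, conjTranspose_sum]
  exact Finset.sum_congr rfl fun i hi => (hf i hi).eq

lemma traceNorm_sum_le {ι : Type*} (s : Finset ι) (f : ι → Matrix n n ℂ)
    (hf : ∀ i ∈ s, (f i).IsHermitian) :
    traceNorm (∑ i ∈ s, f i) ≤ ∑ i ∈ s, traceNorm (f i) := by
  classical
  induction s using Finset.cons_induction with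
  | empty => simp [traceNorm_zero]
  | cons a s ha ih =>
    rw [Finset.sum_cons, Finset.sum_cons]
    have h1 := traceNorm_add_le (hf a (Finset.mem_cons_self a s))
      (isHermitian_sum_of s f fun i hi => hf i (Finset.mem_cons_of_mem hi))
    have h2 := ih fun i hi => hf i (Finset.mem_cons_of_mem hi)
    linarith

end auxLemmas

lemma sum_abssq_coeff_eq_one {N : ℕ} {m : Type*} [Fintype m] [DecidableEq m]
    (hcard : Fintype.card m = N) (E : Fin N → (m → ℂ))
    (horth : ∀ k l, star (E k) ⬝ᵥ E l = if k = l then 1 else 0)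
    (ψ : m → ℂ) (hψ : star ψ ⬝ᵥ ψ = 1) :
    ∑ k, (‖star (E k) ⬝ᵥ ψ‖) ^ 2 = 1 := by
  classical
  let e : m ≃ Fin N := Fintype.equivFinOfCardEq hcard
  set M : Matrix (Fin N) (Fin N) ℂ := Matrix.of (fun k i => (starRingEnd ℂ) (E k (e.symm i))) with hMdef
  have hMM' : M * Mᴴ = 1 := by
    ext k l
    rw [mul_apply]
    have : ∀ i, M k i * Mᴴ i l = (starRingEnd ℂ) (E k (e.symm i)) * E l (e.symm i) := by
      intro i
      rw [conjTranspose_apply, hMdef]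
      simp [Complex.star_def]
    rw [Finset.sum_congr rfl fun i _ => this i]
    have h2 := horth k l
    rw [dotProduct] at h2
    simp only [Pi.star_apply, Complex.star_def] at h2
    rw [← Equiv.sum_comp e.symm (fun p => (starRingEnd ℂ) (E k p) * E l p)] at h2
    rw [h2, Matrix.one_apply]
  have hMM : Mᴴ * M = 1 := mul_eq_one_comm.mp hMM'
  set v : Fin N → ℂ := fun i => ψ (e.symm i) with hvdef
  have hc : ∀ k, star (E k) ⬝ᵥ ψ = (M *ᵥ v) k := by
    intro k
    rw [mulVec, dotProduct, dotProduct]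
    rw [← Equiv.sum_comp e.symm (fun p => star (E k) p * ψ p)]
    simp [hMdef, hvdef, Pi.star_apply, Complex.star_def]
  have hvv : star v ⬝ᵥ v = 1 := by
    rw [dotProduct] at hψ ⊢
    rw [← Equiv.sum_comp e.symm (fun p => star ψ p * ψ p)] at hψ
    exact hψ
  have key : ∑ k, ((‖(M *ᵥ v) k‖ ^ 2 : ℝ) : ℂ) = 1 := by
    have h1 : ∀ k, ((‖(M *ᵥ v) k‖ ^ 2 : ℝ) : ℂ)
        = star ((M *ᵥ v) k) * (M *ᵥ v) k := by
      intro k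
      rw [Complex.star_def, mul_comm, Complex.mul_conj, Complex.normSq_eq_norm_sq]
    rw [Finset.sum_congr rfl fun k _ => h1 k]
    have : ∑ k, star ((M *ᵥ v) k) * (M *ᵥ v) k = star (M *ᵥ v) ⬝ᵥ (M *ᵥ v) := rfl
    rw [this, star_mulVec, dotProduct_mulVec, vecMul_vecMul, hMM, vecMul_one, hvv]
  have : ∑ k, (‖(M *ᵥ v) k‖) ^ 2 = 1 := by exact_mod_cast key
  rw [← this]
  exact Finset.sum_congr rfl fun k _ => by rw [hc k]

lemma outer_self_isHermitian {n : Type*} (v : n → ℂ) : (outer v v).IsHermitian := by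
  ext i j
  simp [outer, vecMulVec_apply, conjTranspose_apply, Pi.star_apply, mul_comm]

lemma ptraceB_isHermitian {dS dB : ℕ} {M : Matrix (Fin dS × Fin dB) (Fin dS × Fin dB) ℂ}
    (h : M.IsHermitian) : (ptraceB M).IsHermitian := by
  ext i j
  simp only [ptraceB, conjTranspose_apply, of_apply, star_sum]
  refine Finset.sum_congr rfl fun b _ => ?_
  exact h.apply (i, b) (j, b)

lemma isHermitian_real_smul {n : Type*} (c : ℝ) {M : Matrix n n ℂ} (h : M.IsHermitian) :
    (((c : ℝ) : ℂ) • M).IsHermitian := by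
  rw [Matrix.IsHermitian, conjTranspose_smul, h.eq]
  congr 1
  simp [Complex.conj_ofReal]

lemma prodVec_norm {dS dB : ℕ} (s : Fin dS → ℂ) (φ : Fin dB → ℂ) :
    star (prodVec s φ) ⬝ᵥ prodVec s φ = (star s ⬝ᵥ s) * (star φ ⬝ᵥ φ) := by
  rw [dotProduct, dotProduct, dotProduct, Finset.sum_mul_sum, Fintype.sum_prod_type]
  refine Finset.sum_congr rfl fun i _ => Finset.sum_congr rfl fun j _ => ?_
  simp only [prodVec, Pi.star_apply, star_mul']
  ring

/-- Nonthermalization theorem (nondegenerate case): the reduced time-averaged states of two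
pure product initial states remain distinguishable,
`D(ω^{S(1)}, ω^{S(2)}) ≥ D(ψ₀^{S(1)}, ψ₀^{S(2)}) − R(ψ₀^{(1)}) − R(ψ₀^{(2)})`. -/
theorem nonthermalization_nondegenerate {dS dB : ℕ}
    (H : Matrix (Fin dS × Fin dB) (Fin dS × Fin dB) ℂ)
    (E : Fin (dS * dB) → (Fin dS × Fin dB → ℂ)) (Ek : Fin (dS * dB) → ℝ)
    (horth : ∀ k l, star (E k) ⬝ᵥ E l = if k = l then 1 else 0)
    (heig : ∀ k, H.mulVec (E k) = (Ek k : ℂ) • E k)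
    (hnondeg : Function.Injective Ek)
    (s₁ s₂ : Fin dS → ℂ) (hs₁ : star s₁ ⬝ᵥ s₁ = 1) (hs₂ : star s₂ ⬝ᵥ s₂ = 1)
    (φ₁ φ₂ : Fin dB → ℂ) (hφ₁ : star φ₁ ⬝ᵥ φ₁ = 1) (hφ₂ : star φ₂ ⬝ᵥ φ₂ = 1)
    (c₁ c₂ : Fin (dS * dB) → ℂ)
    (hc₁ : ∀ k, c₁ k = star (E k) ⬝ᵥ prodVec s₁ φ₁)
    (hc₂ : ∀ k, c₂ k = star (E k) ⬝ᵥ prodVec s₂ φ₂)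
    (ωS₁ ωS₂ : Matrix (Fin dS) (Fin dS) ℂ)
    (hωS₁ : ωS₁ = ∑ k, ((‖c₁ k‖ ^ 2 : ℝ) : ℂ) • ptraceB (outer (E k) (E k)))
    (hωS₂ : ωS₂ = ∑ k, ((‖c₂ k‖ ^ 2 : ℝ) : ℂ) • ptraceB (outer (E k) (E k)))
    (R₁ R₂ : ℝ)
    (hR₁ : R₁ = ∑ k, ‖c₁ k‖ ^ 2 *
      traceDist (ptraceB (outer (E k) (E k))) (outer s₁ s₁))
    (hR₂ : R₂ = ∑ k, ‖c₂ k‖ ^ 2 *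
      traceDist (ptraceB (outer (E k) (E k))) (outer s₂ s₂)) :
    traceDist ωS₁ ωS₂ ≥ traceDist (outer s₁ s₁) (outer s₂ s₂) - R₁ - R₂ := by
  classical
  have hXh : ∀ k, (ptraceB (outer (E k) (E k))).IsHermitian :=
    fun k => ptraceB_isHermitian (outer_self_isHermitian (E k))
  have hY₁ : (outer s₁ s₁).IsHermitian := outer_self_isHermitian s₁
  have hY₂ : (outer s₂ s₂).IsHermitian := outer_self_isHermitian s₂
  have hcard : Fintype.card (Fin dS × Fin dB) = dS * dB := by simp
  -- normalization of coefficients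
  have hψ₁ : star (prodVec s₁ φ₁) ⬝ᵥ prodVec s₁ φ₁ = 1 := by
    rw [prodVec_norm, hs₁, hφ₁, one_mul]
  have hψ₂ : star (prodVec s₂ φ₂) ⬝ᵥ prodVec s₂ φ₂ = 1 := by
    rw [prodVec_norm, hs₂, hφ₂, one_mul]
  have hsum₁ : ∑ k, (‖c₁ k‖) ^ 2 = 1 := by
    have h := sum_abssq_coeff_eq_one hcard E horth (prodVec s₁ φ₁) hψ₁
    rw [← h]
    exact Finset.sum_congr rfl fun k _ => by rw [hc₁ k]
  have hsum₂ : ∑ k, (‖c₂ k‖) ^ 2 = 1 := by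
    have h := sum_abssq_coeff_eq_one hcard E horth (prodVec s₂ φ₂) hψ₂
    rw [← h]
    exact Finset.sum_congr rfl fun k _ => by rw [hc₂ k]
  -- Hermitian reduced averaged states
  have hω₁ : ωS₁.IsHermitian := by
    rw [hωS₁]
    exact isHermitian_sum_of _ _ fun k _ => isHermitian_real_smul _ (hXh k)
  have hω₂ : ωS₂.IsHermitian := by
    rw [hωS₂]
    exact isHermitian_sum_of _ _ fun k _ => isHermitian_real_smul _ (hXh k)
  -- decomposition bound
  have hbound : ∀ (c : Fin (dS * dB) → ℂ) (s : Fin dS → ℂ) (ω : Matrix (Fin dS) (Fin dS) ℂ),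
      (∑ k, (‖c k‖) ^ 2 = 1) →
      (ω = ∑ k, (((‖c k‖) ^ 2 : ℝ) : ℂ) • ptraceB (outer (E k) (E k))) →
      (outer s s).IsHermitian →
      traceNorm (ω - outer s s) ≤
        2 * ∑ k, (‖c k‖) ^ 2 * traceDist (ptraceB (outer (E k) (E k))) (outer s s) := by
    intro c s ω hsum hω hYs
    have hdec : ω - outer s s
        = ∑ k, (((‖c k‖) ^ 2 : ℝ) : ℂ) • (ptraceB (outer (E k) (E k)) - outer s s) := by
      rw [hω]
      simp only [smul_sub, Finset.sum_sub_distrib, ← Finset.sum_smul]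
      congr 1
      have h1 : (∑ k, (((‖c k‖) ^ 2 : ℝ) : ℂ)) = 1 := by
        rw [← Complex.ofReal_sum, hsum, Complex.ofReal_one]
      rw [h1, one_smul]
    rw [hdec]
    have hterm : ∀ k : Fin (dS * dB),
        ((((‖c k‖) ^ 2 : ℝ) : ℂ) • (ptraceB (outer (E k) (E k)) - outer s s)).IsHermitian :=
      fun k => isHermitian_real_smul _ ((hXh k).sub hYs)
    calc traceNorm (∑ k, (((‖c k‖) ^ 2 : ℝ) : ℂ) • (ptraceB (outer (E k) (E k)) - outer s s))
        ≤ ∑ k, traceNorm ((((‖c k‖) ^ 2 : ℝ) : ℂ) • (ptraceB (outer (E k) (E k)) - outer s s)) :=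
          traceNorm_sum_le _ _ fun k _ => hterm k
      _ = ∑ k, (‖c k‖) ^ 2 * traceNorm (ptraceB (outer (E k) (E k)) - outer s s) :=
          Finset.sum_congr rfl fun k _ => traceNorm_smul_real (sq_nonneg _) _
      _ = 2 * ∑ k, (‖c k‖) ^ 2 * traceDist (ptraceB (outer (E k) (E k))) (outer s s) := by
          rw [Finset.mul_sum]
          refine Finset.sum_congr rfl fun k _ => ?_
          rw [traceDist]
          ring
  have hbound₁ := hbound c₁ s₁ ωS₁ hsum₁ hωS₁ hY₁
  have hbound₂ := hbound c₂ s₂ ωS₂ hsum₂ hωS₂ hY₂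
  rw [← hR₁] at hbound₁
  rw [← hR₂] at hbound₂
  -- triangle inequality
  have e1 : outer s₁ s₁ - outer s₂ s₂
      = (outer s₁ s₁ - ωS₁) + ((ωS₁ - ωS₂) + (ωS₂ - outer s₂ s₂)) := by abel
  have htri : traceNorm (outer s₁ s₁ - outer s₂ s₂)
      ≤ traceNorm (outer s₁ s₁ - ωS₁) + (traceNorm (ωS₁ - ωS₂) + traceNorm (ωS₂ - outer s₂ s₂)) := by
    rw [e1]
    refine le_trans (traceNorm_add_le (hY₁.sub hω₁) ((hω₁.sub hω₂).add (hω₂.sub hY₂))) ?_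
    exact add_le_add (le_refl _) (traceNorm_add_le (hω₁.sub hω₂) (hω₂.sub hY₂))
  have hneg : traceNorm (outer s₁ s₁ - ωS₁) = traceNorm (ωS₁ - outer s₁ s₁) := by
    rw [← traceNorm_neg (ωS₁ - outer s₁ s₁), neg_sub]
  rw [hneg] at htri
  rw [ge_iff_le, traceDist, traceDist]
  linarith
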